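/- Let x̄ ∈ ℝ^n and let a = (a_1, …, a_ω) be an index tuple such that F(x̄) ⊆ {f^{a_1}(x̄), …, f^{a_ω}(x̄)} + K. If d ∈ ℝ^n satisfies ∇f^{a_j}(x̄)ᵀd ∈ −int(K) for all j ∈ {1,…,ω}, then there exists ᾱ > 0 such that for all α ∈ (0, ᾱ): F(x̄) ⊆ F(x̄ + α·d) + int(K), i.e., F(x̄ + α·d) ≺^ℓ F(x̄). -/

import Mathlib

open Set Pointwise

/-- If `F(x̄) ⊆ {f^{a_1}(x̄), …, f^{a_ω}(x̄)} + K` and `d` satisfies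
`∇f^{a_j}(x̄)ᵀd ∈ -int K` for all `j`, then there is `ᾱ > 0` such that for all
`α ∈ (0, ᾱ)`: `F(x̄) ⊆ F(x̄ + α•d) + int K`, i.e. `F(x̄ + α•d) ≺^ℓ F(x̄)`. -/
theorem statement9 {n m p : ℕ} (K : Set (EuclideanSpace ℝ (Fin m)))
    (hKne : K.Nonempty) (hKclosed : IsClosed K) (hKconv : Convex ℝ K)
    (hKcone : ∀ t : ℝ, 0 ≤ t → ∀ y ∈ K, t • y ∈ K)
    (hKpointed : K ∩ (-K) = {0}) (hKsolid : (interior K).Nonempty)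
    (f : Fin p → EuclideanSpace ℝ (Fin n) → EuclideanSpace ℝ (Fin m))
    (hf : ∀ i, ContDiff ℝ 1 (f i))
    {ω : ℕ} (hω : 0 < ω) (a : Fin ω → Fin p)
    (xb : EuclideanSpace ℝ (Fin n))
    (hdom : Set.range (fun i => f i xb) ⊆ Set.range (fun j => f (a j) xb) + K)
    (d : EuclideanSpace ℝ (Fin n))
    (hd : ∀ j : Fin ω, fderiv ℝ (f (a j)) xb d ∈ -(interior K)) :
    ∃ αb : ℝ, 0 < αb ∧ ∀ α : ℝ, 0 < α → α < αb →
      Set.range (fun i => f i xb) ⊆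
        Set.range (fun i => f i (xb + α • d)) + interior K := by
  haveI : Nonempty (Fin ω) := ⟨⟨0, hω⟩⟩
  -- K + K ⊆ K
  have hKadd : ∀ u ∈ K, ∀ v ∈ K, u + v ∈ K := by
    intro u hu v hv
    have h2 : (2:ℝ) • ((1/2 : ℝ) • u + (1/2 : ℝ) • v) ∈ K :=
      hKcone 2 (by norm_num) _ (hKconv hu hv (by norm_num) (by norm_num) (by norm_num))
    have : (2:ℝ) • ((1/2 : ℝ) • u + (1/2 : ℝ) • v) = u + v := by
      rw [smul_add, smul_smul, smul_smul]; norm_num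
    rwa [this] at h2
  -- interior K + K ⊆ interior K
  have hintadd : ∀ u ∈ interior K, ∀ v ∈ K, u + v ∈ interior K := by
    intro u hu v hv
    have hsub : (fun y => y + v) '' interior K ⊆ K := by
      rintro _ ⟨y, hy, rfl⟩
      exact hKadd y (interior_subset hy) v hv
    have hopen : IsOpen ((fun y => y + v) '' interior K) :=
      (isOpenMap_add_right v) _ isOpen_interior
    exact interior_maximal hsub hopen ⟨u, hu, rfl⟩
  -- positive scaling preserves interior K
  have hintsmul : ∀ α : ℝ, 0 < α → ∀ u ∈ interior K, α • u ∈ interior K := by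
    intro α hα u hu
    have h1 : α • K ⊆ K := by
      rintro _ ⟨y, hy, rfl⟩; exact hKcone α hα.le y hy
    have : α • u ∈ α • interior K := ⟨u, hu, rfl⟩
    rw [← interior_smul₀ hα.ne' K] at this
    exact interior_mono h1 this
  -- the curves
  set c : Fin ω → ℝ → EuclideanSpace ℝ (Fin m) := fun j t => f (a j) (xb + t • d) with hc
  have hc0 : ∀ j, c j 0 = f (a j) xb := by intro j; simp [hc]
  -- for each j, a threshold
  have key : ∀ j : Fin ω, ∃ δ : ℝ, 0 < δ ∧ ∀ α ∈ Ioo (0:ℝ) δ,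
      c j 0 - c j α ∈ interior K := by
    intro j
    have hderivline : HasDerivAt (fun t : ℝ => xb + t • d) d 0 := by
      have := ((hasDerivAt_id (0:ℝ)).smul_const d).const_add xb
      simpa using this
    have hF : HasFDerivAt (f (a j)) (fderiv ℝ (f (a j)) xb) xb :=
      (((hf (a j)).differentiable one_ne_zero) xb).hasFDerivAt
    have hF' : HasFDerivAt (f (a j)) (fderiv ℝ (f (a j)) xb)
        ((fun t : ℝ => xb + t • d) 0) := by simpa using hF
    have hcd : HasDerivAt (c j) (fderiv ℝ (f (a j)) xb d) 0 :=
      hF'.comp_hasDerivAt 0 hderivline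
    have hslope := hasDerivAt_iff_tendsto_slope.mp hcd
    have hmem : -(fderiv ℝ (f (a j)) xb d) ∈ interior K := by
      have := hd j; rwa [Set.mem_neg] at this
    have htend : Filter.Tendsto (fun α => -(slope (c j) 0 α))
        (nhdsWithin 0 (Ioi 0)) (nhds (-(fderiv ℝ (f (a j)) xb d))) := by
      refine (hslope.neg).mono_left (nhdsWithin_mono 0 ?_)
      intro x hx; exact ne_of_gt hx
    have hev : ∀ᶠ α in nhdsWithin 0 (Ioi 0), -(slope (c j) 0 α) ∈ interior K :=
      htend.eventually (isOpen_interior.mem_nhds hmem)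
    rw [Filter.eventually_iff, mem_nhdsGT_iff_exists_Ioo_subset] at hev
    obtain ⟨u, hu, hsub⟩ := hev
    refine ⟨u, hu, fun α hα => ?_⟩
    have hin := hsub hα
    have hin' : -(slope (c j) 0 α) ∈ interior K := hin
    have hs : -(slope (c j) 0 α) = α⁻¹ • (c j 0 - c j α) := by
      simp [slope, vsub_eq_sub, ← smul_neg, neg_sub]
    rw [hs] at hin'
    have := hintsmul α hα.1 _ hin'
    rwa [smul_smul, mul_inv_cancel₀ hα.1.ne', one_smul] at this
  choose δ hδpos hδ using key
  refine ⟨Finset.univ.inf' Finset.univ_nonempty δ, ?_, ?_⟩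
  · rw [Finset.lt_inf'_iff]; exact fun j _ => hδpos j
  · rintro α hα hαlt _ ⟨i, rfl⟩
    obtain ⟨_, ⟨j, rfl⟩, k, hk, hsum⟩ := hdom ⟨i, rfl⟩
    have hαδ : α ∈ Ioo (0:ℝ) (δ j) :=
      ⟨hα, lt_of_lt_of_le hαlt (Finset.inf'_le _ (Finset.mem_univ j))⟩
    have h1 : c j 0 - c j α ∈ interior K := hδ j α hαδ
    have h2 : (c j 0 - c j α) + k ∈ interior K := hintadd _ h1 _ hk
    have hsum' : f (a j) xb + k = f i xb := hsum
    refine ⟨f (a j) (xb + α • d), ⟨a j, rfl⟩, (c j 0 - c j α) + k, h2, ?_⟩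
    show f (a j) (xb + α • d) + ((c j 0 - c j α) + k) = f i xb
    simp only [hc, zero_smul, add_zero]
    rw [← hsum']; abel
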